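/- Let u_1,...,u_m and v_1,...,v_m be two regular sequences of monomials in S with u_i | v_i for all i, and v_j ≠ u_j for some index j. Then sdepth_S((u_1,...,u_m)/(v_1,...,v_m)) = n - m; moreover (u_1,...,u_m)/(v_1,...,v_m) admits a Stanley decomposition in which every Stanley space has dimension exactly n - m. -/

import Mathlib

/- Combinatorial formalization of Stanley depth for quotients `J/I` of monomial
ideals in `S = K[x_1,...,x_n]`: monomials are identified with their exponent
vectors in `Fin n → ℕ`, the `ℤⁿ`-graded module `J/I` is identified with the set
of exponent vectors of monomials in `J \ I`, and a Stanley decomposition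
`⊕ uᵢ K[Zᵢ]` is identified with a partition of this set into "intervals"
`{b | aᵢ ≤ b ∧ (b = aᵢ outside Zᵢ)}` (the exponent set of `x^{aᵢ} K[Zᵢ]`).
This correspondence is exact and the resulting Stanley depth is independent of
the field `K`. `sdepthOn V M` is the Stanley depth of `M` as a module over the
polynomial subring on the variables in `V` (e.g. `S' = K[x_2,...,x_n]`). -/

/-- The set of exponent vectors of the Stanley space `x^a · K[Z]`. -/
def SInterval {n : ℕ} (a : Fin n → ℕ) (Z : Finset (Fin n)) : Set (Fin n → ℕ) :=
  {b | a ≤ b ∧ ∀ i ∉ Z, b i = a i}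

/-- A (combinatorial) Stanley decomposition of the set `M` of exponent vectors,
using only variables from `V`. -/
def IsStanleyDecompOn {n : ℕ} (V : Finset (Fin n)) (M : Set (Fin n → ℕ)) {r : ℕ}
    (a : Fin r → Fin n → ℕ) (Z : Fin r → Finset (Fin n)) : Prop :=
  (∀ i, Z i ⊆ V) ∧ (∀ i, SInterval (a i) (Z i) ⊆ M) ∧
    (∀ x ∈ M, ∃ i, x ∈ SInterval (a i) (Z i)) ∧
    ∀ i j, i ≠ j → Disjoint (SInterval (a i) (Z i)) (SInterval (a j) (Z j))

/-- The Stanley depth of `M`, viewed over the polynomial ring on the variables in `V`. -/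
noncomputable def sdepthOn {n : ℕ} (V : Finset (Fin n)) (M : Set (Fin n → ℕ)) : ℕ :=
  sSup {d | ∃ (r : ℕ), 0 < r ∧ ∃ (a : Fin r → Fin n → ℕ) (Z : Fin r → Finset (Fin n)),
    IsStanleyDecompOn V M a Z ∧ ∀ i, d ≤ (Z i).card}

/-- The Stanley depth over the full polynomial ring `S = K[x_1,...,x_n]`. -/
noncomputable def sdepth {n : ℕ} (M : Set (Fin n → ℕ)) : ℕ := sdepthOn Finset.univ M

/-- Exponent vectors of the monomial ideal generated by the monomials `x^a`, `a ∈ A`. -/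
def upSet {n : ℕ} (A : Set (Fin n → ℕ)) : Set (Fin n → ℕ) := {c | ∃ a ∈ A, a ≤ c}

/-- `M` is the set of exponent vectors of the monomials of a monomial ideal. -/
def IsMonomialIdealSet {n : ℕ} (M : Set (Fin n → ℕ)) : Prop :=
  ∀ a ∈ M, ∀ b, a ≤ b → b ∈ M

/-- All monomials of `M` only involve the variables in `V`. -/
def SupportedOn {n : ℕ} (V : Finset (Fin n)) (M : Set (Fin n → ℕ)) : Prop :=
  ∀ c ∈ M, ∀ i ∉ V, c i = 0

/-- The support of a monomial. -/
def msupp {n : ℕ} (u : Fin n → ℕ) : Finset (Fin n) :=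
  Finset.univ.filter fun i => u i ≠ 0

/-- A regular sequence of monomials: monic nonunit monomials with pairwise
disjoint supports. -/
def IsRegSeqM {n m : ℕ} (u : Fin m → Fin n → ℕ) : Prop :=
  (∀ j, u j ≠ 0) ∧ ∀ j k, j ≠ k → Disjoint (msupp (u j)) (msupp (u k))

namespace Stmt12Aux

lemma mem_msupp {n : ℕ} {u : Fin n → ℕ} {i : Fin n} : i ∈ msupp u ↔ u i ≠ 0 := by
  simp [msupp]

lemma le_add_iff_of_disjoint {n : ℕ} {w s c : Fin n → ℕ}
    (h : Disjoint (msupp w) (msupp s)) : w ≤ s + c ↔ w ≤ c := by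
  constructor
  · intro hle k
    by_cases h0 : w k = 0
    · simp [h0]
    · have hs : s k = 0 := by
        by_contra hs
        exact (Finset.disjoint_left.1 h (mem_msupp.2 h0)) (mem_msupp.2 hs)
      have := hle k
      simpa [Pi.add_apply, hs] using this
  · intro hle k
    calc w k ≤ c k := hle k
    _ ≤ s k + c k := Nat.le_add_left _ _

lemma sinterval_shift {n : ℕ} (s a : Fin n → ℕ) (Z : Finset (Fin n)) :
    SInterval (s + a) Z = (fun d => s + d) '' SInterval a Z := by
  ext c
  simp only [SInterval, Set.mem_setOf_eq, Set.mem_image]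
  constructor
  · rintro ⟨h1, h2⟩
    refine ⟨c - s, ⟨fun k => ?_, fun k hk => ?_⟩, funext fun k => ?_⟩
    · have := h1 k; simp only [Pi.add_apply] at this; simp only [Pi.sub_apply]; omega
    · have h := h2 k hk; have := h1 k; simp only [Pi.add_apply] at h this
      simp only [Pi.sub_apply]; omega
    · have := h1 k; simp only [Pi.add_apply] at this ⊢; simp only [Pi.sub_apply]; omega
  · rintro ⟨d, ⟨h1, h2⟩, rfl⟩
    refine ⟨fun k => ?_, fun k hk => ?_⟩
    · simp only [Pi.add_apply]; exact Nat.add_le_add_left (h1 k) _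
    · simp only [Pi.add_apply]; rw [h2 k hk]


section Core

variable {n m : ℕ} (T : Fin m → Fin n → ℕ)

/-- summand of the base point of the interval indexed by `f`. -/
def coreS (f : ∀ j : Fin m, Σ k : Fin n, Fin (T j k)) (j : Fin m) (k : Fin n) : ℕ :=
  if k = (f j).1 then ((f j).2 : ℕ) else if k < (f j).1 then T j k else 0

def coreA (f : ∀ j : Fin m, Σ k : Fin n, Fin (T j k)) : Fin n → ℕ :=
  fun k => ∑ j, coreS T f j k

def coreZ (f : ∀ j : Fin m, Σ k : Fin n, Fin (T j k)) : Finset (Fin n) :=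
  Finset.univ \ Finset.image (fun j => (f j).1) Finset.univ

variable (hdisj : ∀ j j', j ≠ j' → Disjoint (msupp (T j)) (msupp (T j')))

lemma fst_mem_supp (f : ∀ j : Fin m, Σ k : Fin n, Fin (T j k)) (j : Fin m) :
    (f j).1 ∈ msupp (T j) :=
  mem_msupp.2 (Nat.pos_iff_ne_zero.mp (lt_of_le_of_lt (Nat.zero_le _) (f j).2.isLt))

lemma coreS_ne_zero_mem {f : ∀ j : Fin m, Σ k : Fin n, Fin (T j k)} {j : Fin m} {k : Fin n}
    (h : coreS T f j k ≠ 0) : k ∈ msupp (T j) := by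
  unfold coreS at h
  split_ifs at h with h1 h2
  · exact h1 ▸ fst_mem_supp T f j
  · exact mem_msupp.2 h
  · exact absurd rfl h

include hdisj

lemma fst_injective (f : ∀ j : Fin m, Σ k : Fin n, Fin (T j k)) :
    Function.Injective fun j => (f j).1 := by
  intro j j' h
  dsimp only at h
  by_contra hne
  exact Finset.disjoint_left.1 (hdisj j j' hne) (fst_mem_supp T f j)
    (h ▸ fst_mem_supp T f j')

lemma coreZ_card (f : ∀ j : Fin m, Σ k : Fin n, Fin (T j k)) :
    (coreZ T f).card = n - m := by
  unfold coreZ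
  rw [Finset.card_sdiff_of_subset (Finset.subset_univ _), Finset.card_univ, Fintype.card_fin,
    Finset.card_image_of_injective _ (fst_injective T hdisj f), Finset.card_univ,
    Fintype.card_fin]

lemma coreA_apply_fst (f : ∀ j : Fin m, Σ k : Fin n, Fin (T j k)) (j : Fin m) :
    coreA T f (f j).1 = ((f j).2 : ℕ) := by
  unfold coreA
  rw [Finset.sum_eq_single j]
  · simp [coreS]
  · intro j' _ hne
    by_contra h
    exact Finset.disjoint_left.1 (hdisj j' j hne) (coreS_ne_zero_mem T h)
      (fst_mem_supp T f j)
  · simp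

omit hdisj in
lemma fst_not_mem_coreZ (f : ∀ j : Fin m, Σ k : Fin n, Fin (T j k)) (j : Fin m) :
    (f j).1 ∉ coreZ T f := by
  simp [coreZ]

lemma core_subset (f : ∀ j : Fin m, Σ k : Fin n, Fin (T j k)) :
    SInterval (coreA T f) (coreZ T f) ⊆ {c | ∀ j, ¬ T j ≤ c} := by
  rintro c ⟨h1, h2⟩ j hle
  have hc : c (f j).1 = ((f j).2 : ℕ) := by
    rw [h2 _ (fst_not_mem_coreZ T f j), coreA_apply_fst T hdisj]
  have := hle (f j).1
  rw [hc] at this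
  exact absurd this (not_le.2 (f j).2.isLt)

lemma core_cover {c : Fin n → ℕ} (hc : ∀ j, ¬ T j ≤ c) :
    ∃ f, c ∈ SInterval (coreA T f) (coreZ T f) := by
  classical
  have hex : ∀ j, ∃ k : Fin n, (c k < T j k) ∧ ∀ k', k' < k → T j k' ≤ c k' := by
    intro j
    have h1 : ∃ k, c k < T j k := by
      have := hc j
      rw [Pi.le_def] at this
      push_neg at this
      simpa using this
    set F : Finset (Fin n) := Finset.univ.filter fun k => c k < T j k with hF
    have hFne : F.Nonempty := ⟨h1.choose, by simp [hF, h1.choose_spec]⟩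
    refine ⟨F.min' hFne, ?_, ?_⟩
    · have := F.min'_mem hFne; simp [hF] at this; exact this
    · intro k' hk'
      by_contra hlt
      exact absurd (F.min'_le k' (by simp [hF]; omega)) (not_le.2 hk')
  choose K hK1 hK2 using hex
  refine ⟨fun j => ⟨K j, ⟨c (K j), hK1 j⟩⟩, fun k => ?_, fun k hk => ?_⟩
  · -- coreA ≤ c at k
    set f : ∀ j : Fin m, Σ k : Fin n, Fin (T j k) := fun j => ⟨K j, ⟨c (K j), hK1 j⟩⟩ with hf
    have hterm : ∀ j, coreS T f j k ≤ c k := by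
      intro j
      unfold coreS
      split_ifs with h1 h2
      · simp [hf, h1]; exact le_rfl
      · exact hK2 j k (by simpa [hf] using h2)
      · exact Nat.zero_le _
    show coreA T f k ≤ c k
    by_cases hall : ∀ j, coreS T f j k = 0
    · unfold coreA
      rw [Finset.sum_eq_zero (fun j _ => hall j)]
      exact Nat.zero_le _
    · push_neg at hall
      obtain ⟨j0, hj0⟩ := hall
      unfold coreA
      rw [Finset.sum_eq_single j0]
      · exact hterm j0
      · intro j' _ hne
        by_contra h
        exact Finset.disjoint_left.1 (hdisj j' j0 hne) (coreS_ne_zero_mem T h)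
          (coreS_ne_zero_mem T hj0)
      · simp
  · -- off coreZ
    set f : ∀ j : Fin m, Σ k : Fin n, Fin (T j k) := fun j => ⟨K j, ⟨c (K j), hK1 j⟩⟩ with hf
    show c k = coreA T f k
    simp only [coreZ, Finset.mem_sdiff, Finset.mem_univ, true_and, not_not,
      Finset.mem_image] at hk
    obtain ⟨j, -, hj⟩ := hk
    exact (coreA_apply_fst T hdisj f j).symm

lemma core_disjoint {f f' : ∀ j : Fin m, Σ k : Fin n, Fin (T j k)} (hne : f ≠ f') :
    Disjoint (SInterval (coreA T f) (coreZ T f)) (SInterval (coreA T f') (coreZ T f')) := by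
  rw [Set.disjoint_left]
  intro c hcf hcf'
  apply hne
  funext j
  have key : ∀ (g g' : ∀ j : Fin m, Σ k : Fin n, Fin (T j k)),
      c ∈ SInterval (coreA T g) (coreZ T g) → c ∈ SInterval (coreA T g') (coreZ T g') →
      (g j).1 < (g' j).1 → False := by
    intro g g' hg hg' hlt
    have h1 : c (g j).1 = ((g j).2 : ℕ) :=
      (hg.2 _ (fst_not_mem_coreZ T g j)).trans (coreA_apply_fst T hdisj g j)
    have h2 : coreA T g' (g j).1 ≤ c (g j).1 := hg'.1 (g j).1
    have h3 : coreS T g' j (g j).1 ≤ coreA T g' (g j).1 :=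
      Finset.single_le_sum (f := fun j' => coreS T g' j' (g j).1)
        (fun _ _ => Nat.zero_le _) (Finset.mem_univ j)
    have h4 : coreS T g' j (g j).1 = T j (g j).1 := by
      unfold coreS
      rw [if_neg hlt.ne, if_pos hlt]
    have h5 : ((g j).2 : ℕ) < T j (g j).1 := (g j).2.isLt
    omega
  have hfst : (f j).1 = (f' j).1 := by
    rcases lt_trichotomy (f j).1 (f' j).1 with h|h|h
    · exact (key f f' hcf hcf' h).elim
    · exact h
    · exact (key f' f hcf' hcf h).elim
  have e1 : c (f j).1 = ((f j).2 : ℕ) :=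
    (hcf.2 _ (fst_not_mem_coreZ T f j)).trans (coreA_apply_fst T hdisj f j)
  have e2 : c (f' j).1 = ((f' j).2 : ℕ) :=
    (hcf'.2 _ (fst_not_mem_coreZ T f' j)).trans (coreA_apply_fst T hdisj f' j)
  have hsnd : ((f j).2 : ℕ) = ((f' j).2 : ℕ) := by rw [← e1, ← e2, hfst]
  exact Sigma.ext hfst ((Fin.heq_ext_iff (by rw [hfst])).2 hsnd)

end Core
end Stmt12Aux


/-- for regular sequences of monomials `u_1,...,u_m` and
`v_1,...,v_m` with `u_i ∣ v_i` and `u_j ≠ v_j` for some `j`,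
`sdepth_S((u_1,...,u_m)/(v_1,...,v_m)) = n - m`; moreover there is a Stanley
decomposition all of whose Stanley spaces have dimension `n - m`. -/
theorem stmt_12 {n m : ℕ} (hm : 1 ≤ m) (u v : Fin m → Fin n → ℕ)
    (hu : IsRegSeqM u) (hv : IsRegSeqM v) (hdvd : ∀ i, u i ≤ v i)
    (hne : ∃ j, v j ≠ u j) :
    sdepth (upSet (Set.range u) \ upSet (Set.range v)) = n - m ∧
      ∃ (r : ℕ), 0 < r ∧ ∃ (a : Fin r → Fin n → ℕ) (Z : Fin r → Finset (Fin n)),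
        IsStanleyDecompOn Finset.univ
          (upSet (Set.range u) \ upSet (Set.range v)) a Z ∧
        ∀ i, (Z i).card = n - m := by
  classical
  obtain ⟨hu1, hu2⟩ := hu
  obtain ⟨hv1, hv2⟩ := hv
  set M : Set (Fin n → ℕ) := upSet (Set.range u) \ upSet (Set.range v) with hM
  have mem_M : ∀ c, c ∈ M ↔ (∃ i, u i ≤ c) ∧ ∀ j, ¬ v j ≤ c := by
    intro c
    constructor
    · rintro ⟨⟨a, ⟨i, rfl⟩, hle⟩, h2⟩
      exact ⟨⟨i, hle⟩, fun j hj => h2 ⟨v j, ⟨j, rfl⟩, hj⟩⟩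
    · rintro ⟨⟨i, hi⟩, h2⟩
      refine ⟨⟨u i, ⟨i, rfl⟩, hi⟩, ?_⟩
      rintro ⟨a, ⟨j, rfl⟩, hle⟩
      exact h2 j hle
  have hsupp_uv : ∀ i, msupp (u i) ⊆ msupp (v i) := by
    intro i k hk
    rw [Stmt12Aux.mem_msupp] at hk ⊢
    have h2 : u i k ≤ v i k := hdvd i k
    omega
  set T : Fin m → Fin m → Fin n → ℕ :=
    fun i j => if j < i then u j else if j = i then v i - u i else v j with hT
  have hTlt : ∀ i j, j < i → T i j = u j := by
    intro i j h
    simp only [hT]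
    rw [if_pos h]
  have hTeq : ∀ i, T i i = v i - u i := by
    intro i
    simp [hT]
  have hTgt : ∀ i j, i < j → T i j = v j := by
    intro i j h
    simp only [hT]
    rw [if_neg (not_lt.2 h.le), if_neg h.ne']
  have hTsupp : ∀ i j, msupp (T i j) ⊆ msupp (v j) := by
    intro i j k hk
    rw [Stmt12Aux.mem_msupp] at hk ⊢
    rcases lt_trichotomy j i with h|h|h
    · rw [hTlt i j h] at hk
      have h2 : u j k ≤ v j k := hdvd j k
      omega
    · subst h
      rw [hTeq j] at hk
      simp only [Pi.sub_apply] at hk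
      omega
    · rw [hTgt i j h] at hk
      exact hk
  have hTdisj : ∀ i, ∀ j j', j ≠ j' → Disjoint (msupp (T i j)) (msupp (T i j')) :=
    fun i j j' hne => Finset.disjoint_of_subset_left (hTsupp i j)
      (Finset.disjoint_of_subset_right (hTsupp i j') (hv2 j j' hne))
  have hNM : ∀ (i : Fin m) (d : Fin n → ℕ), (∀ j, ¬ T i j ≤ d) → u i + d ∈ M := by
    intro i d hd
    rw [mem_M]
    refine ⟨⟨i, fun k => Nat.le_add_right _ _⟩, fun j hj => ?_⟩
    rcases lt_trichotomy j i with h|h|h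
    · have hdj : Disjoint (msupp (u j)) (msupp (u i)) := hu2 j i h.ne
      have h1 : u j ≤ u i + d := le_trans (hdvd j) hj
      exact hd j ((hTlt i j h).symm ▸ (Stmt12Aux.le_add_iff_of_disjoint hdj).1 h1)
    · subst h
      refine hd j ((hTeq j).symm ▸ fun k => ?_)
      have h1 : v j k ≤ u j k + d k := hj k
      have h2 : u j k ≤ v j k := hdvd j k
      show v j k - u j k ≤ d k
      omega
    · have hdj : Disjoint (msupp (v j)) (msupp (u i)) :=
        Finset.disjoint_of_subset_right (hsupp_uv i) (hv2 j i h.ne')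
      exact hd j ((hTgt i j h).symm ▸ (Stmt12Aux.le_add_iff_of_disjoint hdj).1 hj)
  have hMN : ∀ c ∈ M, ∃ i : Fin m, u i ≤ c ∧ (∀ j, ¬ T i j ≤ c - u i) := by
    intro c hc
    rw [mem_M] at hc
    obtain ⟨hex, hnv⟩ := hc
    set F : Finset (Fin m) := Finset.univ.filter (fun i => u i ≤ c) with hF
    have hFne : F.Nonempty := ⟨hex.choose, by simp [hF, hex.choose_spec]⟩
    set i := F.min' hFne with hi
    have hui : u i ≤ c := by
      have := F.min'_mem hFne
      simp only [hF, Finset.mem_filter] at this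
      exact this.2
    have hleast : ∀ j, j < i → ¬ u j ≤ c := by
      intro j hj hle
      exact absurd (F.min'_le j (by simp [hF, hle])) (not_le.2 hj)
    refine ⟨i, hui, fun j => ?_⟩
    rcases lt_trichotomy j i with h|h|h
    · rw [hTlt i j h]
      intro hle
      exact hleast j h (le_trans hle (fun k => Nat.sub_le _ _))
    · subst h
      rw [hTeq i]
      intro hle
      apply hnv i
      intro k
      have h1 : v i k - u i k ≤ c k - u i k := hle k
      have h2 : u i k ≤ c k := hui k
      have h3 : u i k ≤ v i k := hdvd i k
      show v i k ≤ c k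
      omega
    · rw [hTgt i j h]
      intro hle
      exact hnv j (le_trans hle (fun k => Nat.sub_le _ _))
  -- the decomposition, indexed by a sigma type
  have hsub : ∀ p : Σ i : Fin m, ∀ j : Fin m, Σ k : Fin n, Fin (T i j k),
      SInterval (u p.1 + Stmt12Aux.coreA (T p.1) p.2) (Stmt12Aux.coreZ (T p.1) p.2) ⊆ M := by
    intro p
    rw [Stmt12Aux.sinterval_shift]
    rintro c ⟨d, hd, rfl⟩
    exact hNM p.1 d (Stmt12Aux.core_subset (T p.1) (hTdisj p.1) p.2 hd)
  have hcov : ∀ c ∈ M, ∃ p : Σ i : Fin m, ∀ j : Fin m, Σ k : Fin n, Fin (T i j k),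
      c ∈ SInterval (u p.1 + Stmt12Aux.coreA (T p.1) p.2) (Stmt12Aux.coreZ (T p.1) p.2) := by
    intro c hc
    obtain ⟨i, hui, hN⟩ := hMN c hc
    obtain ⟨f, hf⟩ := Stmt12Aux.core_cover (T i) (hTdisj i) hN
    refine ⟨⟨i, f⟩, ?_⟩
    rw [Stmt12Aux.sinterval_shift]
    refine ⟨c - u i, hf, funext fun k => ?_⟩
    have h1 : u i k ≤ c k := hui k
    show u i k + (c k - u i k) = c k
    omega
  have hdisjI : ∀ p q : Σ i : Fin m, ∀ j : Fin m, Σ k : Fin n, Fin (T i j k), p ≠ q →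
      Disjoint (SInterval (u p.1 + Stmt12Aux.coreA (T p.1) p.2) (Stmt12Aux.coreZ (T p.1) p.2))
        (SInterval (u q.1 + Stmt12Aux.coreA (T q.1) q.2) (Stmt12Aux.coreZ (T q.1) q.2)) := by
    intro p q hpq
    rw [Set.disjoint_left]
    intro c hcp hcq
    obtain ⟨i, f⟩ := p
    obtain ⟨i', f'⟩ := q
    have key : ∀ (i1 i2 : Fin m), i1 < i2 →
        ∀ (f1 : ∀ j : Fin m, Σ k : Fin n, Fin (T i1 j k))
          (f2 : ∀ j : Fin m, Σ k : Fin n, Fin (T i2 j k)),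
        c ∈ SInterval (u i1 + Stmt12Aux.coreA (T i1) f1) (Stmt12Aux.coreZ (T i1) f1) →
        c ∈ SInterval (u i2 + Stmt12Aux.coreA (T i2) f2) (Stmt12Aux.coreZ (T i2) f2) →
        False := by
      intro i1 i2 h12 f1 f2 h1 h2
      rw [Stmt12Aux.sinterval_shift] at h1 h2
      obtain ⟨d1, hd1, he1⟩ := h1
      obtain ⟨d2, hd2, he2⟩ := h2
      have hn2 := Stmt12Aux.core_subset (T i2) (hTdisj i2) f2 hd2
      have hd12 : Disjoint (msupp (u i1)) (msupp (u i2)) := hu2 i1 i2 h12.ne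
      have he1' : u i1 + d1 = c := he1
      have he2' : u i2 + d2 = c := he2
      have hle : u i1 ≤ u i2 + d2 := by
        rw [he2', ← he1']
        exact fun k => Nat.le_add_right _ _
      exact hn2 i1 ((hTlt i2 i1 h12).symm ▸ (Stmt12Aux.le_add_iff_of_disjoint hd12).1 hle)
    by_cases hii : i = i'
    · subst hii
      have hff : f ≠ f' := fun h => hpq (by rw [h])
      rw [Stmt12Aux.sinterval_shift] at hcp hcq
      obtain ⟨d, hd, rfl⟩ := hcp
      obtain ⟨d', hd', heq⟩ := hcq
      have hdd : d = d' := by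
        funext k
        have h1 : u i k + d' k = u i k + d k := congrFun heq k
        omega
      subst hdd
      exact Set.disjoint_left.1 (Stmt12Aux.core_disjoint (T i) (hTdisj i) hff) hd hd'
    · rcases lt_or_gt_of_ne hii with h|h
      · exact key i i' h f f' hcp hcq
      · exact key i' i h f' f hcq hcp
  -- the special element cs of M, and upper bound for all decompositions
  obtain ⟨j0, hj0⟩ := hne
  have hex0 : ∃ k, u j0 k < v j0 k := by
    by_contra h
    push_neg at h
    exact hj0 (le_antisymm h (hdvd j0))
  have hKex : ∀ j, ∃ k, 0 < v j k ∧ (j = j0 → u j0 k < v j0 k) := by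
    intro j
    by_cases hj : j = j0
    · subst hj
      obtain ⟨k, hk⟩ := hex0
      exact ⟨k, by omega, fun _ => hk⟩
    · have h1 : u j ≠ 0 := hu1 j
      have h2 : ∃ k, u j k ≠ 0 := by
        by_contra h
        push_neg at h
        exact h1 (funext h)
      obtain ⟨k, hk⟩ := h2
      exact ⟨k, by have h2 : u j k ≤ v j k := hdvd j k; omega, fun h => absurd h hj⟩
  choose K hK1 hK2 using hKex
  have hKsupp : ∀ j, K j ∈ msupp (v j) :=
    fun j => Stmt12Aux.mem_msupp.2 (by have := hK1 j; omega)
  have hKinj : Function.Injective K := by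
    intro j j' h
    by_contra hne'
    exact Finset.disjoint_left.1 (hv2 j j' hne') (hKsupp j) (h ▸ hKsupp j')
  set cs : Fin n → ℕ := fun k => ∑ j, (if k = K j then v j k - 1 else v j k) with hcs
  have hterm_le : ∀ j k, (if k = K j then v j k - 1 else v j k) ≤ cs k := by
    intro j k
    exact Finset.single_le_sum (f := fun j => if k = K j then v j k - 1 else v j k)
      (fun _ _ => Nat.zero_le _) (Finset.mem_univ j)
  have hcs_at : ∀ j, cs (K j) = v j (K j) - 1 := by
    intro j
    show (∑ j', (if K j = K j' then v j' (K j) - 1 else v j' (K j))) = v j (K j) - 1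
    rw [Finset.sum_eq_single j]
    · rw [if_pos rfl]
    · intro j' _ hne'
      have h0 : v j' (K j) = 0 := by
        by_contra h
        exact Finset.disjoint_left.1 (hv2 j' j hne') (Stmt12Aux.mem_msupp.2 h) (hKsupp j)
      rw [if_neg (fun h => hne' (hKinj h.symm))]
      exact h0
    · simp
  have hcsM : cs ∈ M := by
    rw [mem_M]
    constructor
    · refine ⟨j0, fun k => ?_⟩
      show u j0 k ≤ cs k
      by_cases hk : k = K j0
      · subst hk
        have h1 := hcs_at j0
        have h2 := hK2 j0 rfl
        omega
      · have h1 := hterm_le j0 k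
        rw [if_neg hk] at h1
        have h2 : u j0 k ≤ v j0 k := hdvd j0 k
        omega
    · intro j hle
      have h1 : v j (K j) ≤ cs (K j) := hle (K j)
      have h2 := hcs_at j
      have h3 := hK1 j
      omega
  have hub : ∀ d ∈ {d | ∃ (r : ℕ), 0 < r ∧ ∃ (a : Fin r → Fin n → ℕ)
      (Z : Fin r → Finset (Fin n)), IsStanleyDecompOn Finset.univ M a Z ∧
      ∀ i, d ≤ (Z i).card}, d ≤ n - m := by
    rintro d ⟨r, hr, a, Z, ⟨hZV, hsub', hcov', hdisj'⟩, hd⟩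
    obtain ⟨i0, hi0⟩ := hcov' cs hcsM
    have hKZ : ∀ j, K j ∉ Z i0 := by
      intro j hKj
      set b : Fin n → ℕ := Function.update cs (K j) (cs (K j) + 1) with hb
      have hbI : b ∈ SInterval (a i0) (Z i0) := by
        refine ⟨le_trans hi0.1 (fun k => ?_), fun k hk => ?_⟩
        · show cs k ≤ b k
          rcases eq_or_ne k (K j) with rfl|h
          · rw [hb, Function.update_self]
            omega
          · rw [hb, Function.update_of_ne h]
        · have hkKj : k ≠ K j := fun h => hk (h ▸ hKj)
          rw [hb, Function.update_of_ne hkKj]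
          exact hi0.2 k hk
      have hbM := hsub' i0 hbI
      have hvb : v j ≤ b := by
        intro k
        show v j k ≤ b k
        rcases eq_or_ne k (K j) with rfl|h
        · rw [hb, Function.update_self]
          have h1 := hcs_at j
          have h2 := hK1 j
          omega
        · rw [hb, Function.update_of_ne h]
          have h1 := hterm_le j k
          rw [if_neg h] at h1
          exact h1
      exact hbM.2 ⟨v j, ⟨j, rfl⟩, hvb⟩
    have himg : Finset.image K Finset.univ ⊆ Finset.univ \ Z i0 := by
      intro k hk
      simp only [Finset.mem_image, Finset.mem_univ, true_and] at hk
      obtain ⟨j, rfl⟩ := hk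
      simp [hKZ j]
    have h1 : m ≤ (Finset.univ \ Z i0).card := by
      calc m = (Finset.image K Finset.univ).card := by
            rw [Finset.card_image_of_injective _ hKinj, Finset.card_univ, Fintype.card_fin]
        _ ≤ _ := Finset.card_le_card himg
    have h2 : (Finset.univ \ Z i0).card = n - (Z i0).card := by
      rw [Finset.card_sdiff_of_subset (Finset.subset_univ _), Finset.card_univ, Fintype.card_fin]
    have h3 : (Z i0).card ≤ n := by
      calc (Z i0).card ≤ Finset.univ.card := Finset.card_le_card (Finset.subset_univ _)
        _ = n := by rw [Finset.card_univ, Fintype.card_fin]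
    have h4 := hd i0
    omega
  -- assemble the explicit decomposition over Fin r
  have hNI : Nonempty (Σ i : Fin m, ∀ j : Fin m, Σ k : Fin n, Fin (T i j k)) :=
    ⟨(hcov cs hcsM).choose⟩
  set r := Fintype.card (Σ i : Fin m, ∀ j : Fin m, Σ k : Fin n, Fin (T i j k)) with hr
  have hrpos : 0 < r := Fintype.card_pos
  set e : Fin r ≃ (Σ i : Fin m, ∀ j : Fin m, Σ k : Fin n, Fin (T i j k)) :=
    (Fintype.equivFin _).symm with he
  have hdec : IsStanleyDecompOn Finset.univ M
      (fun t => u (e t).1 + Stmt12Aux.coreA (T (e t).1) (e t).2)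
      (fun t => Stmt12Aux.coreZ (T (e t).1) (e t).2) ∧
      ∀ t : Fin r, (Stmt12Aux.coreZ (T (e t).1) (e t).2).card = n - m := by
    refine ⟨⟨fun t => Finset.subset_univ _, fun t => hsub (e t), fun c hc => ?_,
      fun t t' htt => hdisjI (e t) (e t') (fun h => htt (e.injective h))⟩,
      fun t => Stmt12Aux.coreZ_card (T (e t).1) (hTdisj (e t).1) (e t).2⟩
    obtain ⟨p, hp⟩ := hcov c hc
    obtain ⟨t, rfl⟩ := e.surjective p
    exact ⟨t, hp⟩
  constructor
  · rw [sdepth, sdepthOn]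
    have hmem : (n - m) ∈ {d | ∃ (r : ℕ), 0 < r ∧ ∃ (a : Fin r → Fin n → ℕ)
        (Z : Fin r → Finset (Fin n)), IsStanleyDecompOn Finset.univ M a Z ∧
        ∀ i, (n - m) ≤ (Z i).card} :=
      ⟨r, hrpos, _, _, hdec.1, fun t => (hdec.2 t).ge⟩
    exact le_antisymm (csSup_le ⟨n - m, hmem⟩ hub) (le_csSup ⟨n - m, hub⟩ hmem)
  · exact ⟨r, hrpos, _, _, hdec.1, hdec.2⟩
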